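/- Let R be a commutative ring of prime characteristic p and φ : R → R a p^{-1}-linear map with φ surjective. Suppose that for every nonzero c ∈ R, the ideal J_c = Σ_{e≥0} R·φ^e(cR) equals R. Then for every nonzero c ∈ R there exist N ≥ 1 and r ∈ R and an R-linear map ψ : F^N_* R → R with ψ(c) = 1, i.e., an additive map ψ : R → R satisfying ψ(s^{p^N} x) = s ψ(x) and ψ(c) = 1. -/

import Mathlib

/-- Let `φ : R → R` be a surjective `p^{-1}`-linear map, and suppose that for every nonzero
`c ∈ R` the ideal `J_c = Σ_{e ≥ 0} R · φ^e (c R)` is all of `R`.  Then for every nonzero `c`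
there exist `N ≥ 1`, `r ∈ R`, and the map `ψ = (x ↦ φ^N (r * x))` is additive,
`p^{-N}`-linear (`ψ (s ^ p ^ N * x) = s * ψ x`), and satisfies `ψ c = 1`. -/
theorem stmt9 {R : Type*} [CommRing R] (p : ℕ) [Fact p.Prime] [CharP R p]
    (φ : R → R)
    (hadd : ∀ x y : R, φ (x + y) = φ x + φ y)
    (hlin : ∀ r x : R, φ (r ^ p * x) = r * φ x)
    (hsurj : Function.Surjective φ)
    (hJ : ∀ c : R, c ≠ 0 →
      (1 : R) ∈ Ideal.span {y : R | ∃ (e : ℕ) (x : R), y = φ^[e] (c * x)}) :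
    ∀ c : R, c ≠ 0 → ∃ (N : ℕ) (r : R), 1 ≤ N ∧
      ∃ ψ : R → R, ψ = (fun x => φ^[N] (r * x)) ∧
        (∀ x y : R, ψ (x + y) = ψ x + ψ y) ∧
        (∀ s x : R, ψ (s ^ p ^ N * x) = s * ψ x) ∧
        ψ c = 1 := by
  have hppos : 0 < p := (Fact.out : p.Prime).pos
  have iter_add : ∀ (k : ℕ) (x y : R), φ^[k] (x + y) = φ^[k] x + φ^[k] y := by
    intro k
    induction k with
    | zero => intro x y; simp
    | succ k ih =>
      intro x y
      rw [Function.iterate_succ_apply, hadd, ih, Function.iterate_succ_apply,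
        Function.iterate_succ_apply]
  have iter_zero : ∀ k : ℕ, φ^[k] (0 : R) = 0 := by
    intro k
    have := iter_add k 0 0
    simpa using this.symm
  have iter_lin : ∀ (k : ℕ) (s x : R), φ^[k] (s ^ p ^ k * x) = s * φ^[k] x := by
    intro k
    induction k with
    | zero => intro s x; simp
    | succ k ih =>
      intro s x
      rw [Function.iterate_succ_apply, Function.iterate_succ_apply, pow_succ, pow_mul,
        hlin, ih]
  have key : ∀ (c : R) (e N : ℕ), e ≤ N → ∀ r x : R, ∃ v : R,
      r * φ^[e] (c * x) = φ^[N] (c * v) := by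
    intro c e N hle r x
    obtain ⟨m, rfl⟩ : ∃ m, N = e + m := ⟨N - e, by omega⟩
    obtain ⟨w, hw⟩ := (hsurj.iterate m) (r ^ p ^ e * x)
    refine ⟨c ^ (p ^ m - 1) * w, ?_⟩
    have hk : p ^ m - 1 + 1 = p ^ m :=
      Nat.sub_add_cancel (Nat.one_le_pow _ _ hppos)
    have hc : c * (c ^ (p ^ m - 1) * w) = c ^ p ^ m * w := by
      rw [← mul_assoc, ← pow_succ', hk]
    rw [hc, Function.iterate_add_apply, iter_lin, hw,
      show c * (r ^ p ^ e * x) = r ^ p ^ e * (c * x) by ring, iter_lin]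
  intro c hc
  obtain ⟨n, f, g, hsum⟩ := Submodule.mem_span_set'.mp (hJ c hc)
  have hg : ∀ i, ∃ (e : ℕ) (x : R), (g i : R) = φ^[e] (c * x) := fun i => (g i).2
  choose E X hEX using hg
  set N : ℕ := Finset.univ.sup E + 1 with hNdef
  have hle : ∀ i, E i ≤ N := fun i =>
    le_trans (Finset.le_sup (Finset.mem_univ i)) (Nat.le_succ _)
  have hV : ∀ i, ∃ v : R, f i * φ^[E i] (c * X i) = φ^[N] (c * v) :=
    fun i => key c (E i) N (hle i) (f i) (X i)
  choose V hVspec using hV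
  refine ⟨N, ∑ i, V i, Nat.le_add_left 1 _, fun x => φ^[N] ((∑ i, V i) * x), rfl, ?_, ?_, ?_⟩
  · intro x y
    dsimp only
    rw [mul_add, iter_add]
  · intro s x
    dsimp only
    rw [show (∑ i, V i) * (s ^ p ^ N * x) = s ^ p ^ N * ((∑ i, V i) * x) by ring, iter_lin]
  · have h1 : (1 : R) = ∑ i, φ^[N] (c * V i) := by
      rw [← hsum]
      refine Finset.sum_congr rfl ?_
      intro i _
      rw [smul_eq_mul, hEX i, hVspec i]
    have h2 : ∑ i, φ^[N] (c * V i) = φ^[N] (c * ∑ i, V i) := by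
      rw [Finset.mul_sum]
      induction (Finset.univ : Finset (Fin n)) using Finset.induction with
      | empty => simp [iter_zero]
      | insert _ _ hij ih =>
        rw [Finset.sum_insert hij, Finset.sum_insert hij, iter_add, ih]
    dsimp only
    rw [show (∑ i, V i) * c = c * ∑ i, V i by ring, ← h2, ← h1]
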